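/- For n ≥ 2, define Z(q,T1,T2) = [ (1 − q^{2C(n,2)} T1^n T2)(1 − q^{2C(n,2)+1} T1^{2n−1} T2) + q^{n²} T1^n T2 (1 − q^{−n})(1 − q^{−(n−1)} T1^{n−1}) ] / [ (1 − q^{n²} T2)(1 − q^{n²} T1^n T2)(1 − q^{n²+1} T1^{2n−1} T2) ]. Then inverting q, T1, T2 (i.e. substituting q → q^{−1}, T1 → T1^{−1}, T2 → T2^{−1}) transforms Z into −q^{n²+2n} T2 · Z(q,T1,T2). -/

import Mathlib

noncomputable section

/- The field ℚ(q, T₁, T₂) of rational functions in three variables. -/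
abbrev Kfun : Type := FractionRing (MvPolynomial (Fin 3) ℚ)

def qv : Kfun := algebraMap (MvPolynomial (Fin 3) ℚ) Kfun (MvPolynomial.X 0)
def t1v : Kfun := algebraMap (MvPolynomial (Fin 3) ℚ) Kfun (MvPolynomial.X 1)
def t2v : Kfun := algebraMap (MvPolynomial (Fin 3) ℚ) Kfun (MvPolynomial.X 2)

/- Local bivariate conjugacy class zeta function of G_n (n ≥ 2). -/
def Zg (n : ℕ) (x u1 u2 : Kfun) : Kfun :=
  ((1 - x ^ (2 * n.choose 2) * u1 ^ n * u2) *
        (1 - x ^ (2 * n.choose 2 + 1) * u1 ^ (2 * n - 1) * u2) +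
      x ^ (n ^ 2) * u1 ^ n * u2 * (1 - x ^ (-(n : ℤ))) *
        (1 - x ^ (-((n : ℤ) - 1)) * u1 ^ (n - 1))) /
    ((1 - x ^ (n ^ 2) * u2) * (1 - x ^ (n ^ 2) * u1 ^ n * u2) *
      (1 - x ^ (n ^ 2 + 1) * u1 ^ (2 * n - 1) * u2))

lemma one_sub_inv' {K : Type*} [Field K] {x : K} (hx : x ≠ 0) :
    1 - x⁻¹ = -x⁻¹ * (1 - x) := by field_simp; ring

lemma abstract' {K : Type*} [Field K] (a b m d e P R s : K)
    (ha : a ≠ 0) (hb : b ≠ 0) (hm : m ≠ 0) (hd : d ≠ 0) (he : e ≠ 0)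
    (hP : P ≠ 0) (hR : R ≠ 0)
    (h1 : m * m = a * b * P * R) (h2 : d * m * e = s * (a * b)) :
    ((1 - a⁻¹) * (1 - b⁻¹) + m⁻¹ * (1 - P) * (1 - R)) /
      ((1 - d⁻¹) * (1 - m⁻¹) * (1 - e⁻¹)) =
    -s * (((1 - a) * (1 - b) + m * (1 - P⁻¹) * (1 - R⁻¹)) /
      ((1 - d) * (1 - m) * (1 - e))) := by
  rw [one_sub_inv' ha, one_sub_inv' hb, one_sub_inv' hm, one_sub_inv' hd, one_sub_inv' he,
    one_sub_inv' hP, one_sub_inv' hR]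
  have hnum : (-a⁻¹*(1-a)) * (-b⁻¹*(1-b)) + m⁻¹*(1-P)*(1-R)
      = (a*b)⁻¹ * ((1-a)*(1-b) + m*(-P⁻¹*(1-P))*(-R⁻¹*(1-R))) := by
    field_simp
    linear_combination (-(1-P)*(1-R))*h1
  have hden : (-d⁻¹*(1-d)) * (-m⁻¹*(1-m)) * (-e⁻¹*(1-e))
      = -(d*m*e)⁻¹ * ((1-d)*(1-m)*(1-e)) := by
    rw [mul_inv, mul_inv]; ring
  rw [hnum, hden]
  have hs : s = (d*m*e) * (a*b)⁻¹ := by field_simp; linear_combination -h2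
  rw [hs]
  simp only [div_eq_mul_inv, mul_inv, inv_neg, inv_inv]
  ring

lemma qv_ne : qv ≠ 0 := by
  rw [qv, ne_eq, IsFractionRing.to_map_eq_zero_iff]
  exact MvPolynomial.X_ne_zero 0

lemma t1v_ne : t1v ≠ 0 := by
  rw [t1v, ne_eq, IsFractionRing.to_map_eq_zero_iff]
  exact MvPolynomial.X_ne_zero 1

lemma t2v_ne : t2v ≠ 0 := by
  rw [t2v, ne_eq, IsFractionRing.to_map_eq_zero_iff]
  exact MvPolynomial.X_ne_zero 2

/- Functional equation: inverting q, T₁, T₂ in Z yields −q^{n²+2n} T₂ · Z. -/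
theorem stmt17 (n : ℕ) (hn : 2 ≤ n) :
    Zg n qv⁻¹ t1v⁻¹ t2v⁻¹ = -qv ^ (n ^ 2 + 2 * n) * t2v * Zg n qv t1v t2v := by
  obtain ⟨k, rfl⟩ : ∃ k, n = k + 2 := ⟨n - 2, by omega⟩
  have hdvd : 2 ∣ (k+2)*(k+1) := by
    rw [Nat.mul_comm]
    exact (Nat.even_mul_succ_self (k+1)).two_dvd
  have hch : 2 * (k+2).choose 2 = (k+2)*(k+1) := by
    rw [Nat.choose_two_right, show k+2-1 = k+1 by omega]
    exact Nat.mul_div_cancel' hdvd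
  unfold Zg
  rw [hch, show (((k+2:ℕ)):ℤ) - 1 = ((k+1:ℕ):ℤ) by push_cast; ring,
    show 2*(k+2)-1 = 2*k+3 by omega, show k+2-1 = k+1 by omega]
  simp only [zpow_neg, zpow_natCast, inv_pow, inv_inv]
  simp only [← mul_inv]
  rw [show (qv^(k+1))⁻¹ * t1v^(k+1) = (qv^(k+1) * (t1v^(k+1))⁻¹)⁻¹ by rw [mul_inv, inv_inv],
    show (-qv ^ ((k+2)^2 + 2*(k+2))) * t2v = -(qv^((k+2)^2+2*(k+2)) * t2v) by ring]
  have hq := qv_ne; have h1 := t1v_ne; have h2 := t2v_ne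
  have habs := abstract' (qv^((k+2)*(k+1)) * t1v^(k+2) * t2v)
    (qv^((k+2)*(k+1)+1) * t1v^(2*k+3) * t2v)
    (qv^((k+2)^2) * t1v^(k+2) * t2v)
    (qv^((k+2)^2) * t2v)
    (qv^((k+2)^2+1) * t1v^(2*k+3) * t2v)
    (qv^(k+2)) (qv^(k+1) * (t1v^(k+1))⁻¹)
    (qv^((k+2)^2+2*(k+2)) * t2v)
    (by exact mul_ne_zero (mul_ne_zero (pow_ne_zero _ hq) (pow_ne_zero _ h1)) h2)
    (by exact mul_ne_zero (mul_ne_zero (pow_ne_zero _ hq) (pow_ne_zero _ h1)) h2)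
    (by exact mul_ne_zero (mul_ne_zero (pow_ne_zero _ hq) (pow_ne_zero _ h1)) h2)
    (by exact mul_ne_zero (pow_ne_zero _ hq) h2)
    (by exact mul_ne_zero (mul_ne_zero (pow_ne_zero _ hq) (pow_ne_zero _ h1)) h2)
    (by exact pow_ne_zero _ hq)
    (by exact mul_ne_zero (pow_ne_zero _ hq) (inv_ne_zero (pow_ne_zero _ h1)))
    (by field_simp; ring)
    (by ring)
  exact habs
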